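/- Let (E, F, H) be an irreducible root-of-unity sl₂ triple on a nonzero finite-dimensional complex vector space W of dimension exactly M, with q = exp(2πi n/m) for coprime positive integers n, m and M = m (m odd) or m/2 (m even). Then there exist a nonzero vector ψ ∈ W and j ∈ ℂ with Eψ = 0, Hψ = jψ, and [2j − r + 1]_q ≠ 0 for every integer r with 1 ≤ r ≤ M − 1. -/

import Mathlib

/-- `q = exp(2πi n/m)`. -/
noncomputable def qrou (n m : ℕ) : ℂ :=
  Complex.exp (2 * Real.pi * Complex.I * n / m)

/-- `q^x = exp(2πi n x/m)` for `x ∈ ℂ`. -/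
noncomputable def qpow (n m : ℕ) (x : ℂ) : ℂ :=
  Complex.exp (2 * Real.pi * Complex.I * n * x / m)

/-- The q-number `[x]_q = (q^x − q^(−x))/(q − q⁻¹)`. -/
noncomputable def qnum (n m : ℕ) (x : ℂ) : ℂ :=
  (qpow n m x - qpow n m (-x)) / (qrou n m - (qrou n m)⁻¹)

/-- `M = m` if `m` is odd, `M = m/2` if `m` is even. -/
def Mrou (m : ℕ) : ℕ := if m % 2 = 1 then m else m / 2

lemma qpow_add (n m : ℕ) (x y : ℂ) : qpow n m (x+y) = qpow n m x * qpow n m y := by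
  unfold qpow; rw [← Complex.exp_add]; congr 1; ring

lemma qpow_neg (n m : ℕ) (x : ℂ) : qpow n m (-x) = (qpow n m x)⁻¹ := by
  unfold qpow; rw [← Complex.exp_neg]; congr 1; ring

lemma qrou_eq (n m : ℕ) : qrou n m = qpow n m 1 := by
  unfold qrou qpow; congr 1; ring

lemma qnum_eq (n m : ℕ) (x : ℂ) :
    qnum n m x = (qpow n m x - qpow n m (-x)) / (qpow n m 1 - qpow n m (-1)) := by
  rw [qnum, qrou_eq, ← qpow_neg]

lemma qnum_zero (n m : ℕ) : qnum n m 0 = 0 := by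
  unfold qnum; rw [neg_zero, sub_self, zero_div]

lemma qnum_aux (a a' b b' c c' : ℂ) :
    (c - c')/(a - a') * ((b*c'*a - b'*c*a')/(a - a')) + (b*c'*c' - b'*c*c)/(a - a')
    = (c*a - c'*a')/(a - a') * ((b*c' - b'*c)/(a - a')) := by
  by_cases hs : a - a' = 0
  · simp [hs]
  · rw [div_mul_div_comm, div_mul_div_comm,
      show (b*c'*c' - b'*c*c)/(a-a') = ((b*c'*c' - b'*c*c)*(a-a'))/((a-a')*(a-a')) from
        (mul_div_mul_right _ _ hs).symm,
      ← add_div]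
    congr 1
    ring

lemma qnum_key (n m : ℕ) (j : ℂ) (k : ℕ) :
    qnum n m k * qnum n m (2*j - k + 1) + qnum n m (2*(j - k)) =
    qnum n m ((k:ℂ)+1) * qnum n m (2*j - ((k:ℂ)+1) + 1) := by
  have e : ∀ x y : ℂ, qpow n m (x + y) = qpow n m x * qpow n m y := qpow_add n m
  have h1 : qpow n m (2*j - (k:ℂ) + 1) = qpow n m (2*j) * qpow n m (-(k:ℂ)) * qpow n m 1 := by
    rw [show (2*j - (k:ℂ) + 1) = 2*j + -(k:ℂ) + 1 from by ring, e, e]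
  have h1' : qpow n m (-(2*j - (k:ℂ) + 1)) = qpow n m (-(2*j)) * qpow n m (k:ℂ) * qpow n m (-1) := by
    rw [show (-(2*j - (k:ℂ) + 1)) = -(2*j) + (k:ℂ) + -1 from by ring, e, e]
  have h2 : qpow n m (2*(j - (k:ℂ))) = qpow n m (2*j) * qpow n m (-(k:ℂ)) * qpow n m (-(k:ℂ)) := by
    rw [show (2*(j - (k:ℂ))) = 2*j + -(k:ℂ) + -(k:ℂ) from by ring, e, e]
  have h2' : qpow n m (-(2*(j - (k:ℂ)))) = qpow n m (-(2*j)) * qpow n m (k:ℂ) * qpow n m (k:ℂ) := by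
    rw [show (-(2*(j - (k:ℂ)))) = -(2*j) + (k:ℂ) + (k:ℂ) from by ring, e, e]
  have h3 : qpow n m ((k:ℂ)+1) = qpow n m (k:ℂ) * qpow n m 1 := by
    rw [show ((k:ℂ)+1) = (k:ℂ) + 1 from by ring, e]
  have h3' : qpow n m (-((k:ℂ)+1)) = qpow n m (-(k:ℂ)) * qpow n m (-1) := by
    rw [show (-((k:ℂ)+1)) = -(k:ℂ) + -1 from by ring, e]
  have h4 : qpow n m (2*j - ((k:ℂ)+1) + 1) = qpow n m (2*j) * qpow n m (-(k:ℂ)) := by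
    rw [show (2*j - ((k:ℂ)+1) + 1) = 2*j + -(k:ℂ) from by ring, e]
  have h4' : qpow n m (-(2*j - ((k:ℂ)+1) + 1)) = qpow n m (-(2*j)) * qpow n m (k:ℂ) := by
    rw [show (-(2*j - ((k:ℂ)+1) + 1)) = -(2*j) + (k:ℂ) from by ring, e]
  rw [qnum_eq, qnum_eq, qnum_eq, qnum_eq, qnum_eq, h1, h1', h2, h2', h3, h3', h4, h4']
  exact qnum_aux _ _ _ _ _ _

lemma span_stable {W : Type*} [AddCommGroup W] [Module ℂ W] (T : Module.End ℂ W)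
    (S : Set W) (h : ∀ s ∈ S, T s ∈ Submodule.span ℂ S) :
    ∀ w ∈ Submodule.span ℂ S, T w ∈ Submodule.span ℂ S := by
  intro w hw
  have hsub : S ⊆ ↑((Submodule.span ℂ S).comap T) := fun s hs => h s hs
  exact Submodule.span_le.mpr hsub hw

/-- An irreducible root-of-unity sl₂ triple on a space `W` of dimension
exactly `M` has a nonzero highest-weight vector `ψ` (`Eψ = 0`, `Hψ = jψ`) with
`[2j − r + 1]_q ≠ 0` for every integer `r` with `1 ≤ r ≤ M − 1`. -/
theorem highest_weight_of_dimension_M_triple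
    (n m : ℕ) (hn1 : 1 ≤ n) (hnm : n ≤ m - 1) (hcop : Nat.Coprime n m)
    (W : Type*) [AddCommGroup W] [Module ℂ W] [FiniteDimensional ℂ W] [Nontrivial W]
    (E F H : Module.End ℂ W)
    (hHE : H * E - E * H = E) (hHF : H * F - F * H = -F)
    (hEM : E ^ Mrou m = 0) (hFM : F ^ Mrou m = 0)
    (hEF : ∀ (v : W) (lam : ℂ), H v = lam • v →
      (E * F - F * E) v = qnum n m (2 * lam) • v)
    (hirr : ∀ p : Submodule ℂ W, (∀ w ∈ p, E w ∈ p) → (∀ w ∈ p, F w ∈ p) →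
      (∀ w ∈ p, H w ∈ p) → p = ⊥ ∨ p = ⊤)
    (hdim : Module.finrank ℂ W = Mrou m) :
    ∃ ψ : W, ψ ≠ 0 ∧ ∃ j : ℂ, E ψ = 0 ∧ H ψ = j • ψ ∧
      ∀ r : ℕ, 1 ≤ r → r ≤ Mrou m - 1 → qnum n m (2 * j - (r : ℂ) + 1) ≠ 0 := by
  classical
  have hHEv : ∀ w : W, H (E w) = E (H w) + E w := by
    intro w
    have h := DFunLike.congr_fun hHE w
    simp only [LinearMap.sub_apply, Module.End.mul_apply] at h
    rw [sub_eq_iff_eq_add] at h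
    rw [h, add_comm]
  have hHFv : ∀ w : W, H (F w) = F (H w) - F w := by
    intro w
    have h := DFunLike.congr_fun hHF w
    simp only [LinearMap.sub_apply, Module.End.mul_apply, LinearMap.neg_apply] at h
    rw [sub_eq_iff_eq_add] at h
    rw [h]; abel
  have hEFv : ∀ (w : W) (lam : ℂ), H w = lam • w →
      E (F w) = F (E w) + qnum n m (2*lam) • w := by
    intro w lam hw
    have h := hEF w lam hw
    simp only [LinearMap.sub_apply, Module.End.mul_apply] at h
    rw [sub_eq_iff_eq_add] at h
    rw [h, add_comm]
  obtain ⟨μ, hμ⟩ := Module.End.exists_eigenvalue H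
  obtain ⟨v0, hv0⟩ := hμ.exists_hasEigenvector
  have hv0e : H v0 = μ • v0 := hv0.apply_eq_smul
  have hv0n : v0 ≠ 0 := hv0.right
  have hraise : ∀ i : ℕ, H ((E^i) v0) = (μ + i) • (E^i) v0 := by
    intro i; induction i with
    | zero => simpa using hv0e
    | succ t ih =>
      have h1 : (E^(t+1)) v0 = E ((E^t) v0) := by rw [pow_succ']; rfl
      rw [h1, hHEv, ih, map_smul]
      push_cast
      module
  have hex : ∃ i, (E^i) v0 = 0 := ⟨Mrou m, by rw [hEM]; rfl⟩
  set k := Nat.find hex with hkdef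
  have hk0 : (E^k) v0 = 0 := Nat.find_spec hex
  have hkpos : 0 < k := by
    rcases Nat.eq_zero_or_pos k with h | h
    · exfalso; apply hv0n
      rw [h, pow_zero] at hk0
      simpa using hk0
    · exact h
  set ψ : W := (E^(k-1)) v0 with hψdef
  have hψn : ψ ≠ 0 := Nat.find_min hex (by omega)
  have hEψ : E ψ = 0 := by
    have h1 : E ((E^(k-1)) v0) = (E^(k-1+1)) v0 := by rw [pow_succ']; rfl
    rw [hψdef, h1, show k-1+1 = k from by omega, hk0]
  set j : ℂ := μ + ((k-1 : ℕ) : ℂ) with hjdef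
  have hHψ : H ψ = j • ψ := hraise (k-1)
  set v : ℕ → W := fun i => (F^i) ψ with hvdef
  have hv0' : v 0 = ψ := by simp [hvdef]
  have hFv : ∀ i, F (v i) = v (i+1) := by
    intro i
    show F ((F^i) ψ) = (F^(i+1)) ψ
    rw [pow_succ']; rfl
  have hvM : v (Mrou m) = 0 := by
    show (F ^ Mrou m) ψ = 0
    rw [hFM]; rfl
  have hHv : ∀ i : ℕ, H (v i) = (j - i) • v i := by
    intro i; induction i with
    | zero => simpa [hv0'] using hHψ
    | succ t ih =>
      rw [← hFv, hHFv, ih, map_smul]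
      push_cast
      module
  set c : ℕ → ℂ := fun r => qnum n m r * qnum n m (2*j - r + 1) with hcdef
  have hc0 : c 0 = 0 := by simp [hcdef, qnum_zero]
  have hcrec : ∀ i : ℕ, c i + qnum n m (2*(j - i)) = c (i+1) := by
    intro i
    have h := qnum_key n m j i
    simp only [hcdef]
    push_cast
    exact h
  have hEv : ∀ i : ℕ, E (v i) = c i • v (i - 1) := by
    intro i; induction i with
    | zero => simp [hv0', hEψ, hc0]
    | succ t ih =>
      have h1 : E (v (t+1)) = F (E (v t)) + qnum n m (2*(j - t)) • v t := by
        rw [← hFv]; exact hEFv (v t) (j - t) (hHv t)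
      rw [h1, ih, map_smul, hFv]
      have h2 : c t • v (t - 1 + 1) = c t • v t := by
        cases t with
        | zero => rw [hc0, zero_smul, zero_smul]
        | succ s => rfl
      rw [h2, ← add_smul, hcrec, Nat.add_sub_cancel]
  have hm2 : 2 ≤ m := by omega
  have hM1 : 1 ≤ Mrou m := by unfold Mrou; split <;> omega
  set vv : Fin (Mrou m) → W := fun i => v i with hvvdef
  set p : Submodule ℂ W := Submodule.span ℂ (Set.range vv) with hpdef
  have hgen : ∀ i : ℕ, i < Mrou m → v i ∈ p := fun i h =>
    Submodule.subset_span ⟨⟨i, h⟩, rfl⟩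
  have hEinv : ∀ s ∈ Set.range vv, E s ∈ p := by
    rintro s ⟨i, rfl⟩
    show E (v i.val) ∈ p
    rw [hEv]
    exact p.smul_mem _ (hgen _ (by have := i.isLt; omega))
  have hFinv : ∀ s ∈ Set.range vv, F s ∈ p := by
    rintro s ⟨i, rfl⟩
    show F (v i.val) ∈ p
    rw [hFv]
    by_cases h : i.val + 1 < Mrou m
    · exact hgen _ h
    · have he : i.val + 1 = Mrou m := by have := i.isLt; omega
      rw [he, hvM]; exact p.zero_mem
  have hHinv : ∀ s ∈ Set.range vv, H s ∈ p := by
    rintro s ⟨i, rfl⟩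
    show H (v i.val) ∈ p
    rw [hHv]
    exact p.smul_mem _ (hgen _ i.isLt)
  have hptop : p = ⊤ := by
    rcases hirr p (span_stable E _ hEinv) (span_stable F _ hFinv)
      (span_stable H _ hHinv) with h | h
    · exfalso; apply hψn
      have h1 : ψ ∈ p := by rw [← hv0']; exact hgen 0 (by omega)
      rw [h] at h1
      simpa using h1
    · exact h
  have hcard : Fintype.card (Fin (Mrou m)) = Module.finrank ℂ W := by simp [hdim]
  have hle : ⊤ ≤ Submodule.span ℂ (Set.range vv) := by rw [← hpdef, hptop]
  let b : Module.Basis (Fin (Mrou m)) ℂ W := basisOfTopLeSpanOfCardEqFinrank vv hle hcard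
  have hb : ⇑b = vv := coe_basisOfTopLeSpanOfCardEqFinrank vv hle hcard
  refine ⟨ψ, hψn, j, hEψ, hHψ, ?_⟩
  intro r hr1 hr2 h0
  have hrM : r < Mrou m := by omega
  have hcr : c r = 0 := by
    simp only [hcdef]
    rw [show (2*j - (r:ℂ) + 1) = 2 * j - (r:ℂ) + 1 from rfl, h0, mul_zero]
  set T : Set (Fin (Mrou m)) := {i | r ≤ i.val} with hTdef
  set V : Submodule ℂ W := Submodule.span ℂ (vv '' T) with hVdef
  have hgenV : ∀ i : ℕ, r ≤ i → i < Mrou m → v i ∈ V := fun i h1 h2 =>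
    Submodule.subset_span ⟨⟨i, h2⟩, h1, rfl⟩
  have hEinvV : ∀ s ∈ vv '' T, E s ∈ V := by
    rintro s ⟨i, hi, rfl⟩
    show E (v i.val) ∈ V
    rw [hEv]
    rcases eq_or_lt_of_le (show r ≤ i.val from hi) with h | h
    · rw [← h, hcr, zero_smul]; exact V.zero_mem
    · exact V.smul_mem _ (hgenV (i.val - 1) (by omega) (by have := i.isLt; omega))
  have hFinvV : ∀ s ∈ vv '' T, F s ∈ V := by
    rintro s ⟨i, hi, rfl⟩
    show F (v i.val) ∈ V
    rw [hFv]
    by_cases h : i.val + 1 < Mrou m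
    · exact hgenV _ (by have : r ≤ i.val := hi; omega) h
    · have he : i.val + 1 = Mrou m := by have := i.isLt; omega
      rw [he, hvM]; exact V.zero_mem
  have hHinvV : ∀ s ∈ vv '' T, H s ∈ V := by
    rintro s ⟨i, hi, rfl⟩
    show H (v i.val) ∈ V
    rw [hHv]
    exact V.smul_mem _ (hgenV _ hi i.isLt)
  rcases hirr V (span_stable E _ hEinvV) (span_stable F _ hFinvV)
    (span_stable H _ hHinvV) with h | h
  · have h1 : vv ⟨r, hrM⟩ ∈ V := Submodule.subset_span ⟨⟨r, hrM⟩, le_refl r, rfl⟩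
    have h2 : vv ⟨r, hrM⟩ ≠ 0 := by rw [← hb]; exact b.ne_zero _
    rw [h] at h1
    exact h2 ((Submodule.mem_bot ℂ).mp h1)
  · have h3 : vv ⟨0, by omega⟩ ∉ V := by
      rw [hVdef, ← hb]
      exact b.linearIndependent.notMem_span_image (by
        simp only [hTdef, Set.mem_setOf_eq]
        omega)
    exact h3 (h ▸ Submodule.mem_top)
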